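/- Fix real constants 0 < C₂ < ∞ and a real exponent p > 2. Define f(p,t,y) = (t+y)^p − t^p − y^p − p t^{p−1} y for t > 0, y > 0. Then there exists a constant Â₂ > 0 (depending on p) such that |f(p,t,y)| ≤ (1/2) p^2 C₂^{p−2} y^2 + Â₂ C₂ y^{p−1} for all (t,y) ∈ (0, C₂] × (0, ∞). -/

import Mathlib

open Real Set

/-- Bernoulli lower bound at a point: `a^q + q a^(q-1) (b-a) ≤ b^q`. -/
lemma aux_bern' {a b q : ℝ} (ha : 0 < a) (hb : 0 ≤ b) (hq : 1 ≤ q) :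
    a ^ q + q * a ^ (q - 1) * (b - a) ≤ b ^ q := by
  have hs : (-1 : ℝ) ≤ b / a - 1 := by
    have : (0:ℝ) ≤ b / a := by positivity
    linarith
  have hber := one_add_mul_self_le_rpow_one_add hs hq
  have h0 : 1 + (b / a - 1) = b / a := by ring
  rw [h0] at hber
  have h1 : (b / a) ^ q * a ^ q = b ^ q := by
    rw [← Real.mul_rpow (by positivity) ha.le, div_mul_cancel₀ _ ha.ne']
  have h2 : (1 + q * (b / a - 1)) * a ^ q = a ^ q + q * a ^ (q - 1) * (b - a) := by
    have haq : a ^ q = a ^ (q - 1) * a := by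
      rw [← Real.rpow_add_one ha.ne' (q - 1)]; ring_nf
    rw [haq]; field_simp
  calc a ^ q + q * a ^ (q - 1) * (b - a) = (1 + q * (b / a - 1)) * a ^ q := h2.symm
    _ ≤ (b / a) ^ q * a ^ q := mul_le_mul_of_nonneg_right hber (by positivity)
    _ = b ^ q := h1

/-- Bernoulli lower bound: `a^q + q a^(q-1) y ≤ (a+y)^q`. -/
lemma aux_bern {a y q : ℝ} (ha : 0 < a) (hy : 0 ≤ y) (hq : 1 ≤ q) :
    a ^ q + q * a ^ (q - 1) * y ≤ (a + y) ^ q := by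
  have h := aux_bern' ha (by linarith : (0:ℝ) ≤ a + y) hq
  have h2 : a + y - a = y := by ring
  rw [h2] at h
  exact h

/-- Gradient inequality: `a^q - b^q ≤ q a^(q-1) (a - b)` for `0 < b ≤ a`, `1 ≤ q`. -/
lemma aux_grad {a b q : ℝ} (hb : 0 < b) (hab : b ≤ a) (hq : 1 ≤ q) :
    a ^ q - b ^ q ≤ q * a ^ (q - 1) * (a - b) := by
  have ha : 0 < a := lt_of_lt_of_le hb hab
  have h := aux_bern' ha hb.le hq
  have h2 : q * a ^ (q - 1) * (b - a) = -(q * a ^ (q - 1) * (a - b)) := by ring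
  rw [h2] at h
  linarith

/-- Second-order Taylor upper bound via monotonicity. -/
lemma aux_taylor {p t y K : ℝ} (hp : 2 < p) (ht : 0 < t) (hy : 0 ≤ y)
    (hK : ∀ s ∈ Set.Icc (0 : ℝ) y, p * (p - 1) * (t + s) ^ (p - 2) ≤ K) :
    (t + y) ^ p - t ^ p - p * t ^ (p - 1) * y ≤ K / 2 * y ^ 2 := by
  set φ : ℝ → ℝ := fun s => K / 2 * s ^ 2 + p * t ^ (p - 1) * s + t ^ p - (t + s) ^ p with hφ
  have hderiv : ∀ s : ℝ, 0 < t + s →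
      HasDerivAt φ (K * s + p * t ^ (p - 1) - p * (t + s) ^ (p - 1)) s := by
    intro s hts
    have h1 : HasDerivAt (fun s : ℝ => t + s) 1 s := by
      simpa using (hasDerivAt_id s).const_add t
    have h2 : HasDerivAt (fun s : ℝ => (t + s) ^ p) (p * (t + s) ^ (p - 1) * 1) s :=
      (Real.hasDerivAt_rpow_const (Or.inl hts.ne')).comp s h1
    have h3 : HasDerivAt (fun s : ℝ => K / 2 * s ^ 2 + p * t ^ (p - 1) * s + t ^ p)
        (K / 2 * (2 * s) + p * t ^ (p - 1)) s := by
      have := ((hasDerivAt_pow 2 s).const_mul (K / 2)).add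
        ((hasDerivAt_id s).const_mul (p * t ^ (p - 1)))
      simpa using this.add_const (t ^ p)
    have := h3.sub h2
    refine this.congr_deriv ?_
    ring
  have hmono : MonotoneOn φ (Set.Icc 0 y) := by
    apply monotoneOn_of_deriv_nonneg (convex_Icc 0 y)
    · intro s hs
      have hts : 0 < t + s := by have := hs.1; linarith
      exact (hderiv s hts).continuousAt.continuousWithinAt
    · intro s hs
      rw [interior_Icc] at hs
      have hts : 0 < t + s := by have := hs.1; linarith
      exact (hderiv s hts).differentiableAt.differentiableWithinAt
    · intro s hs
      rw [interior_Icc] at hs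
      have hs0 : 0 < s := hs.1
      have hts : 0 < t + s := by linarith
      rw [(hderiv s hts).deriv]
      have hg : (t + s) ^ (p - 1) - t ^ (p - 1) ≤
          (p - 1) * (t + s) ^ (p - 1 - 1) * (t + s - t) := by
        apply aux_grad ht (by linarith) (by linarith)
      have h1 : p - 1 - 1 = p - 2 := by ring
      have h2 : t + s - t = s := by ring
      rw [h1, h2] at hg
      have hKs := hK s ⟨hs0.le, hs.2.le⟩
      have hp0 : 0 < p := by linarith
      nlinarith [mul_le_mul_of_nonneg_right hKs hs0.le,
        mul_le_mul_of_nonneg_left hg hp0.le]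
  have h0 : φ 0 ≤ φ y := hmono ⟨le_refl 0, hy⟩ ⟨hy, le_refl y⟩ hy
  have hφ0 : φ 0 = 0 := by simp [hφ]
  rw [hφ0] at h0
  simp only [hφ] at h0
  linarith

set_option maxHeartbeats 1000000 in
theorem stmt_5 (C₂ p : ℝ) (h₂ : 0 < C₂) (hp : 2 < p) :
    ∃ A₂hat > 0, ∀ t y : ℝ, 0 < t → t ≤ C₂ → 0 < y →
      |(t + y) ^ p - t ^ p - y ^ p - p * t ^ (p - 1) * y|
      ≤ (1 / 2) * p ^ 2 * C₂ ^ (p - 2) * y ^ 2 + A₂hat * C₂ * y ^ (p - 1) := by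
  have hp1 : (1 : ℝ) < p - 1 := by linarith
  have hp2 : (0 : ℝ) < p - 2 := by linarith
  have hp0 : (0 : ℝ) < p := by linarith
  -- choose ε with (1+ε)^(p-2) = p/(p-1)
  have hbase : 1 < p / (p - 1) := by
    rw [lt_div_iff₀ (by linarith)]; linarith
  obtain ⟨ε, hε0, hεpow⟩ : ∃ ε : ℝ, 0 < ε ∧ (1 + ε) ^ (p - 2) = p / (p - 1) := by
    refine ⟨(p / (p - 1)) ^ (p - 2)⁻¹ - 1, ?_, ?_⟩
    · have : 1 < (p / (p - 1)) ^ (p - 2)⁻¹ :=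
        (Real.one_lt_rpow_iff_of_pos (by positivity)).2 (Or.inl ⟨hbase, by positivity⟩)
      linarith
    · have h0 : 1 + ((p / (p - 1)) ^ (p - 2)⁻¹ - 1) = (p / (p - 1)) ^ (p - 2)⁻¹ := by ring
      rw [h0, ← Real.rpow_mul (by positivity), inv_mul_cancel₀ hp2.ne', Real.rpow_one]
  refine ⟨ε + p * (1 + 1 / ε) ^ (p - 1) + ε ^ (-(p - 1)) + p * ε ^ (-(p - 2)), by positivity,
    fun t y ht htC hy => ?_⟩
  set A : ℝ := ε + p * (1 + 1 / ε) ^ (p - 1) + ε ^ (-(p - 1)) + p * ε ^ (-(p - 2)) with hA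
  clear_value A
  have hA0 : (0 : ℝ) < A := by rw [hA]; positivity
  have hC2 : (0 : ℝ) ≤ C₂ ^ (p - 2) := Real.rpow_nonneg h₂.le _
  have hyp1 : (0 : ℝ) < y ^ (p - 1) := Real.rpow_pos_of_pos hy _
  have hq2 : (0:ℝ) ≤ (1 / 2) * p ^ 2 * C₂ ^ (p - 2) * y ^ 2 := by positivity
  have hApos : (0:ℝ) ≤ A * C₂ * y ^ (p - 1) := by positivity
  rcases le_or_gt y (ε * t) with hcase | hcase
  · -- small y: use Taylor bound
    have htaylor : (t + y) ^ p - t ^ p - p * t ^ (p - 1) * y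
        ≤ (p ^ 2 * C₂ ^ (p - 2)) / 2 * y ^ 2 := by
      apply aux_taylor hp ht hy.le
      intro s hs
      have hts : t + s ≤ (1 + ε) * t := by nlinarith [hs.2]
      have h1 : (t + s) ^ (p - 2) ≤ ((1 + ε) * t) ^ (p - 2) :=
        Real.rpow_le_rpow (by linarith [hs.1]) hts hp2.le
      have h2 : ((1 + ε) * t) ^ (p - 2) = (p / (p - 1)) * t ^ (p - 2) := by
        rw [Real.mul_rpow (by linarith) ht.le, hεpow]
      have h3 : t ^ (p - 2) ≤ C₂ ^ (p - 2) :=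
        Real.rpow_le_rpow ht.le htC hp2.le
      calc p * (p - 1) * (t + s) ^ (p - 2) ≤ p * (p - 1) * ((p / (p - 1)) * t ^ (p - 2)) := by
            rw [← h2]
            apply mul_le_mul_of_nonneg_left h1 (by nlinarith)
        _ = p ^ 2 * t ^ (p - 2) := by field_simp
        _ ≤ p ^ 2 * C₂ ^ (p - 2) := by nlinarith
    have hlow : 0 ≤ (t + y) ^ p - t ^ p - p * t ^ (p - 1) * y := by
      have := aux_bern ht hy.le (by linarith : (1:ℝ) ≤ p)
      linarith
    have hyp : y ^ p ≤ ε * C₂ * y ^ (p - 1) := by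
      have h1 : y ^ p = y ^ (p - 1) * y := by
        rw [← Real.rpow_add_one hy.ne' (p - 1)]; ring_nf
      have h2 : y ≤ ε * C₂ := le_trans hcase (by nlinarith)
      rw [h1]
      calc y ^ (p - 1) * y ≤ y ^ (p - 1) * (ε * C₂) :=
            mul_le_mul_of_nonneg_left h2 hyp1.le
        _ = ε * C₂ * y ^ (p - 1) := by ring
    have hypnn : 0 ≤ y ^ p := Real.rpow_nonneg hy.le p
    have hεA : ε * C₂ * y ^ (p - 1) ≤ A * C₂ * y ^ (p - 1) := by
      have a1 : 0 < p * (1 + 1 / ε) ^ (p - 1) := by positivity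
      have a2 : 0 < ε ^ (-(p - 1)) := by positivity
      have a3 : 0 < p * ε ^ (-(p - 2)) := by positivity
      have hεA' : ε ≤ A := by rw [hA]; linarith
      have b1 : ε * C₂ ≤ A * C₂ := mul_le_mul_of_nonneg_right hεA' h₂.le
      exact mul_le_mul_of_nonneg_right b1 hyp1.le
    rw [abs_le]
    constructor
    · linarith
    · linarith
  · -- large y: t < y / ε
    have htyε : t < y / ε := by rw [lt_div_iff₀ hε0]; nlinarith
    have hty : 0 < t + y := by linarith
    -- term 1 : (t+y)^p - y^p ≤ p (1+1/ε)^(p-1) y^(p-1) t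
    have h1 : (t + y) ^ p - y ^ p ≤ p * (1 + 1 / ε) ^ (p - 1) * y ^ (p - 1) * t := by
      have hg : (t + y) ^ p - y ^ p ≤ p * (t + y) ^ (p - 1) * (t + y - y) :=
        aux_grad hy (by linarith) (by linarith)
      have h2 : t + y - y = t := by ring
      rw [h2] at hg
      have h3 : t + y ≤ (1 + 1 / ε) * y := by
        have h := htyε.le
        rw [div_eq_mul_inv] at h
        calc t + y ≤ y * ε⁻¹ + y := by linarith
          _ = (1 + 1 / ε) * y := by field_simp; ring
      have h4 : (t + y) ^ (p - 1) ≤ ((1 + 1 / ε) * y) ^ (p - 1) :=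
        Real.rpow_le_rpow hty.le h3 (by linarith)
      have h5 : ((1 + 1 / ε) * y) ^ (p - 1) = (1 + 1 / ε) ^ (p - 1) * y ^ (p - 1) :=
        Real.mul_rpow (by positivity) hy.le
      calc (t + y) ^ p - y ^ p ≤ p * (t + y) ^ (p - 1) * t := hg
        _ ≤ p * ((1 + 1 / ε) ^ (p - 1) * y ^ (p - 1)) * t := by
            rw [← h5]
            apply mul_le_mul_of_nonneg_right _ ht.le
            exact mul_le_mul_of_nonneg_left h4 hp0.le
        _ = p * (1 + 1 / ε) ^ (p - 1) * y ^ (p - 1) * t := by ring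
    -- term 2 : t^p ≤ ε^(-(p-1)) y^(p-1) t
    have h2 : t ^ p ≤ ε ^ (-(p - 1)) * y ^ (p - 1) * t := by
      have ha : t ^ p = t ^ (p - 1) * t := by
        rw [← Real.rpow_add_one ht.ne' (p - 1)]; ring_nf
      have hb : t ^ (p - 1) ≤ (y / ε) ^ (p - 1) :=
        Real.rpow_le_rpow ht.le htyε.le (by linarith)
      have hc : (y / ε) ^ (p - 1) = ε ^ (-(p - 1)) * y ^ (p - 1) := by
        rw [Real.div_rpow hy.le hε0.le, Real.rpow_neg hε0.le, div_eq_mul_inv]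
        ring
      rw [ha, ← hc]
      exact mul_le_mul_of_nonneg_right hb ht.le
    -- term 3 : p t^(p-1) y ≤ p ε^(-(p-2)) y^(p-1) t
    have h3 : p * t ^ (p - 1) * y ≤ p * ε ^ (-(p - 2)) * y ^ (p - 1) * t := by
      have ha : t ^ (p - 1) = t ^ (p - 2) * t := by
        rw [← Real.rpow_add_one ht.ne' (p - 2)]; ring_nf
      have hb : t ^ (p - 2) ≤ (y / ε) ^ (p - 2) :=
        Real.rpow_le_rpow ht.le htyε.le hp2.le
      have hc : (y / ε) ^ (p - 2) = ε ^ (-(p - 2)) * y ^ (p - 2) := by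
        rw [Real.div_rpow hy.le hε0.le, Real.rpow_neg hε0.le, div_eq_mul_inv]
        ring
      have hd : y ^ (p - 2) * y = y ^ (p - 1) := by
        rw [← Real.rpow_add_one hy.ne' (p - 2)]; ring_nf
      calc p * t ^ (p - 1) * y = p * (t ^ (p - 2) * t) * y := by rw [ha]
        _ ≤ p * ((ε ^ (-(p - 2)) * y ^ (p - 2)) * t) * y := by
            rw [← hc]
            have h7 := mul_le_mul_of_nonneg_left hb (by positivity : (0:ℝ) ≤ p * t * y)
            calc p * (t ^ (p - 2) * t) * y = p * t * y * t ^ (p - 2) := by ring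
              _ ≤ p * t * y * (y / ε) ^ (p - 2) := h7
              _ = p * ((y / ε) ^ (p - 2) * t) * y := by ring
        _ = p * ε ^ (-(p - 2)) * (y ^ (p - 2) * y) * t := by ring
        _ = p * ε ^ (-(p - 2)) * y ^ (p - 1) * t := by rw [hd]
    -- lower bound : (t+y)^p ≥ y^p
    have hlow : y ^ p ≤ (t + y) ^ p :=
      Real.rpow_le_rpow hy.le (by linarith) hp0.le
    have h5 : 0 ≤ p * t ^ (p - 1) * y := by positivity
    have h6 : 0 ≤ t ^ p := Real.rpow_nonneg ht.le p
    have habs : |(t + y) ^ p - t ^ p - y ^ p - p * t ^ (p - 1) * y|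
        ≤ ((t + y) ^ p - y ^ p) + t ^ p + p * t ^ (p - 1) * y := by
      rw [abs_le]
      constructor <;> nlinarith
    have hsum : ((t + y) ^ p - y ^ p) + t ^ p + p * t ^ (p - 1) * y
        ≤ A * y ^ (p - 1) * t := by
      rw [hA]
      have hεnn : (0:ℝ) ≤ ε * y ^ (p - 1) * t := by positivity
      linarith
    have hfin : A * y ^ (p - 1) * t ≤ A * C₂ * y ^ (p - 1) := by
      calc A * y ^ (p - 1) * t ≤ A * y ^ (p - 1) * C₂ :=
            mul_le_mul_of_nonneg_left htC (by positivity)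
        _ = A * C₂ * y ^ (p - 1) := by ring
    calc |(t + y) ^ p - t ^ p - y ^ p - p * t ^ (p - 1) * y|
        ≤ ((t + y) ^ p - y ^ p) + t ^ p + p * t ^ (p - 1) * y := habs
      _ ≤ A * y ^ (p - 1) * t := hsum
      _ ≤ A * C₂ * y ^ (p - 1) := hfin
      _ ≤ (1 / 2) * p ^ 2 * C₂ ^ (p - 2) * y ^ 2 + A * C₂ * y ^ (p - 1) := by linarith
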